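/- For r = 2 with P(C_1) = p ∈ (0,1), P(C_2) = 1−p, and weights u(C_1), u(C_2) > 0, the quasi-perfect depth Y(α) is a continuous, strictly decreasing function of α on [0,1] (hence, by the intermediate value theorem, for any target depth value y ∈ [0, G] there is a unique α with Y(α) = y). -/

import Mathlib

open Real Set

private lemma hasDerivAt_aux_qpd (C q : ℝ) (hq : 0 < q) {x : ℝ} (hA : 0 < 1 - x + x * q) :
    HasDerivAt (fun α : ℝ => C * (1 - α + α * q) * Real.log ((1 - α + α * q) / q))
      (C * ((q - 1) * Real.log ((1 - x + x * q) / q) + (q - 1))) x := by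
  have h1 : HasDerivAt (fun α : ℝ => 1 - α + α * q) (q - 1) x := by
    have h := ((hasDerivAt_id x).const_sub 1).add ((hasDerivAt_id x).mul_const q)
    exact h.congr_deriv (by ring)
  have h2 : HasDerivAt (fun α : ℝ => Real.log ((1 - α + α * q) / q))
      ((q - 1) / (1 - x + x * q)) x := by
    have hd : HasDerivAt (fun α : ℝ => (1 - α + α * q) / q) ((q - 1) / q) x := h1.div_const q
    have h := (Real.hasDerivAt_log (ne_of_gt (div_pos hA hq))).comp x hd
    refine h.congr_deriv ?_
    field_simp
  have h3 := (h1.const_mul C).mul h2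
  refine h3.congr_deriv ?_
  have e : (1 - x + x * q) * ((q - 1) / (1 - x + x * q)) = q - 1 := by field_simp
  rw [mul_assoc C (1 - x + x * q), e]
  ring

private lemma contOn_aux_qpd (C q : ℝ) (hq : 0 < q) (hq1 : q < 1) :
    ContinuousOn (fun α : ℝ => C * (1 - α + α * q) * Real.log ((1 - α + α * q) / q))
      (Set.Icc 0 1) := by
  have hA : ∀ x ∈ Set.Icc (0:ℝ) 1, (0:ℝ) < 1 - x + x * q := by
    intro x hx
    obtain ⟨h0, h1⟩ := hx
    nlinarith
  have hc : ContinuousOn (fun α : ℝ => (1 - α + α * q) / q) (Set.Icc 0 1) := by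
    fun_prop
  exact (continuousOn_const.mul (by fun_prop)).mul
    (hc.log (fun x hx => ne_of_gt (div_pos (hA x hx) hq)))

theorem quasi_perfect_depth_binary_strict_anti
    (p u1 u2 : ℝ) (hp0 : 0 < p) (hp1 : p < 1) (hu1 : 0 < u1) (hu2 : 0 < u2) :
    (let Y : ℝ → ℝ := fun α =>
      u1 * p * (1 - α + α * p) * Real.log ((1 - α + α * p) / p) +
      u2 * (1 - p) * (1 - α + α * (1 - p)) * Real.log ((1 - α + α * (1 - p)) / (1 - p)) +
      α * Real.log α * (u1 * p * (1 - p) + u2 * (1 - p) * p)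
     ContinuousOn Y (Set.Icc 0 1) ∧ StrictAntiOn Y (Set.Icc 0 1) ∧
      ∀ y ∈ Set.Icc (0 : ℝ) (Y 0), ∃! α, α ∈ Set.Icc (0 : ℝ) 1 ∧ Y α = y) := by
  intro Y
  have hp' : (0:ℝ) < 1 - p := by linarith
  have hcont : ContinuousOn Y (Set.Icc 0 1) := by
    have h1 := contOn_aux_qpd (u1 * p) p hp0 hp1
    have h2 := contOn_aux_qpd (u2 * (1 - p)) (1 - p) hp' (by linarith)
    have h3 : ContinuousOn
        (fun α : ℝ => α * Real.log α * (u1 * p * (1 - p) + u2 * (1 - p) * p))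
        (Set.Icc 0 1) :=
      (Real.continuous_mul_log.mul continuous_const).continuousOn
    exact (h1.add h2).add h3
  have hanti : StrictAntiOn Y (Set.Icc 0 1) := by
    apply strictAntiOn_of_deriv_neg (convex_Icc 0 1) hcont
    intro x hx
    rw [interior_Icc] at hx
    obtain ⟨hx0, hx1⟩ := hx
    have hA : (0:ℝ) < 1 - x + x * p := by nlinarith
    have hB : (0:ℝ) < 1 - x + x * (1 - p) := by nlinarith
    have hD1 := hasDerivAt_aux_qpd (u1 * p) p hp0 hA
    have hD2 := hasDerivAt_aux_qpd (u2 * (1 - p)) (1 - p) hp' hB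
    have hD3 : HasDerivAt
        (fun α : ℝ => α * Real.log α * (u1 * p * (1 - p) + u2 * (1 - p) * p))
        ((Real.log x + 1) * (u1 * p * (1 - p) + u2 * (1 - p) * p)) x :=
      (Real.hasDerivAt_mul_log (ne_of_gt hx0)).mul_const _
    have hD : HasDerivAt Y
        (u1 * p * ((p - 1) * Real.log ((1 - x + x * p) / p) + (p - 1)) +
         u2 * (1 - p) * (((1 - p) - 1) * Real.log ((1 - x + x * (1 - p)) / (1 - p)) + ((1 - p) - 1)) +
         (Real.log x + 1) * (u1 * p * (1 - p) + u2 * (1 - p) * p)) x :=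
      (hD1.add hD2).add hD3
    rw [hD.deriv]
    have hL1 : Real.log x < Real.log ((1 - x + x * p) / p) := by
      apply Real.log_lt_log hx0
      rw [lt_div_iff₀ hp0]
      nlinarith
    have hL2 : Real.log x < Real.log ((1 - x + x * (1 - p)) / (1 - p)) := by
      apply Real.log_lt_log hx0
      rw [lt_div_iff₀ hp']
      nlinarith
    nlinarith [mul_pos hp0 hp', mul_pos hu1 (mul_pos hp0 hp'),
      mul_pos hu2 (mul_pos hp0 hp'),
      mul_lt_mul_of_pos_left hL1 (mul_pos hu1 (mul_pos hp0 hp')),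
      mul_lt_mul_of_pos_left hL2 (mul_pos hu2 (mul_pos hp0 hp'))]
  refine ⟨hcont, hanti, ?_⟩
  have hY1 : Y 1 = 0 := by
    show u1 * p * (1 - 1 + 1 * p) * Real.log ((1 - 1 + 1 * p) / p) + _ + _ = 0
    rw [show (1:ℝ) - 1 + 1 * p = p by ring, show (1:ℝ) - 1 + 1 * (1 - p) = 1 - p by ring,
      div_self (ne_of_gt hp0), div_self (ne_of_gt hp'), Real.log_one]
    simp
  intro y hy
  have hsub := intermediate_value_Icc' (by norm_num : (0:ℝ) ≤ 1) hcont
  rw [hY1] at hsub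
  obtain ⟨α, hα, hαy⟩ := hsub hy
  exact ⟨α, ⟨hα, hαy⟩, fun β hβ => hanti.injOn hβ.1 hα (hβ.2.trans hαy.symm)⟩
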